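/- Let N be a positive integer, τ = u + iv ∈ H, and let x₁, x₂ be real numbers with x₁x₂ > 0; set n := x₁x₂/N. Then ∫_0^∞ φ*_τ(ι_t(x₁,x₂)) dt/t = sgn(x₁)·e(−nτ)·Γ(0, 4πvn), the integral converging absolutely. Equivalently, ∫_0^∞ sgn(t^{−1}x₁ + t x₂)·erfc( √(πv/N)·|t^{−1}x₁ + t x₂| ) dt/t = sgn(x₁)·Γ(0, 4πvn). -/

import Mathlib

open MeasureTheory Filter Set
open Real Topology

noncomputable section

/-- `e(z) = exp(2πiz)` -/
def eC (z : ℂ) : ℂ := Complex.exp (2 * Real.pi * Complex.I * z)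

/-- The complementary error function `erfc(x) = (2/√π)∫_x^∞ e^{-r²} dr`. -/
def erfc (x : ℝ) : ℝ := (2 / Real.sqrt Real.pi) * ∫ r in Set.Ioi x, Real.exp (-(r ^ 2))

/-- The incomplete Gamma function at `s = 0`: `Γ(0,x) = ∫_x^∞ e^{-t}·t⁻¹ dt`. -/
def Gamma0 (x : ℝ) : ℝ := ∫ t in Set.Ioi x, Real.exp (-t) / t

/-- `φ*_τ(x,y) = e(((y²-x²)/2)τ)·sgn(x)·erfc(√(2πv)|x|)`. -/
def phiStar (τ : ℂ) (x y : ℝ) : ℂ :=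
  eC ((((y : ℂ) ^ 2 - (x : ℂ) ^ 2) / 2) * τ) * (Real.sign x : ℂ) *
    (erfc (Real.sqrt (2 * Real.pi * τ.im) * |x|) : ℂ)

/-- The isometry `ι_t(x₁,x₂) = ((t⁻¹x₁+tx₂)/√(2N), (t⁻¹x₁-tx₂)/√(2N))`. -/
def iota (N : ℕ) (t x₁ x₂ : ℝ) : ℝ × ℝ :=
  ((t⁻¹ * x₁ + t * x₂) / Real.sqrt (2 * N), (t⁻¹ * x₁ - t * x₂) / Real.sqrt (2 * N))



lemma gauss_integrable : Integrable (fun r : ℝ => Real.exp (-(r ^ 2))) := by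
  simpa using integrable_exp_neg_mul_sq (one_pos)

lemma s_exp_le_one {s : ℝ} (hs : 0 ≤ s) : s * Real.exp (-s) ≤ 1 := by
  rw [Real.exp_neg]
  have h2 : s ≤ Real.exp s := by have := Real.add_one_le_exp s; linarith
  calc s * (Real.exp s)⁻¹ ≤ Real.exp s * (Real.exp s)⁻¹ := by
        gcongr
      _ = 1 := mul_inv_cancel₀ (Real.exp_pos s).ne'

lemma erfc_nonneg (x : ℝ) : 0 ≤ erfc x := by
  apply mul_nonneg (by positivity)
  exact setIntegral_nonneg measurableSet_Ioi (fun r _ => (Real.exp_pos _).le)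

lemma erfc_le (x : ℝ) : erfc x ≤ 6 * Real.exp (-x) := by
  have h1 : (∫ r in Set.Ioi x, Real.exp (-(r ^ 2))) ≤
      ∫ r in Set.Ioi x, Real.exp (1/4) * Real.exp (-r) := by
    apply setIntegral_mono_on gauss_integrable.integrableOn
    · have h0 : IntegrableOn (fun r : ℝ => Real.exp (-1 * r)) (Set.Ioi x) :=
        exp_neg_integrableOn_Ioi x one_pos
      simp only [neg_one_mul, neg_neg] at h0
      have h0' := h0.const_mul (Real.exp (1/4))
      exact h0'
    · exact measurableSet_Ioi
    · intro r _
      rw [← Real.exp_add]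
      apply Real.exp_le_exp.2
      nlinarith [sq_nonneg (r - 1/2)]
  have h2 : (∫ r in Set.Ioi x, Real.exp (1/4) * Real.exp (-r)) =
      Real.exp (1/4) * Real.exp (-x) := by
    rw [MeasureTheory.integral_const_mul, integral_exp_neg_Ioi]
  have hπ : (1:ℝ) ≤ Real.sqrt Real.pi := by
    rw [show (1:ℝ) = Real.sqrt 1 by simp]
    exact Real.sqrt_le_sqrt (by linarith [Real.pi_gt_three])
  have he : Real.exp (1/4) ≤ 3 := by
    calc Real.exp (1/4:ℝ) ≤ Real.exp 1 := Real.exp_le_exp.2 (by norm_num)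
    _ ≤ 3 := by linarith [Real.exp_one_lt_d9]
  have h3 : 2 / Real.sqrt Real.pi ≤ 2 := by
    rw [div_le_iff₀ (by linarith)]; nlinarith
  unfold erfc
  calc (2 / Real.sqrt Real.pi) * ∫ r in Set.Ioi x, Real.exp (-(r ^ 2))
      ≤ (2 / Real.sqrt Real.pi) * (Real.exp (1/4) * Real.exp (-x)) := by
        apply mul_le_mul_of_nonneg_left (h2 ▸ h1) (by positivity)
    _ ≤ 2 * (3 * Real.exp (-x)) := by
        apply mul_le_mul h3 (by nlinarith [Real.exp_pos (-x)]) (by positivity) (by norm_num)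
    _ = 6 * Real.exp (-x) := by ring

lemma hasDerivAt_erfc (x : ℝ) :
    HasDerivAt erfc (-(2 / Real.sqrt Real.pi) * Real.exp (-(x ^ 2))) x := by
  have key : ∀ y : ℝ, erfc y = (2 / Real.sqrt Real.pi) *
      ((∫ r : ℝ, Real.exp (-(r ^ 2))) - (∫ r in Set.Iic (0:ℝ), Real.exp (-(r ^ 2)))
        - ∫ r in (0:ℝ)..y, Real.exp (-(r ^ 2))) := by
    intro y
    unfold erfc
    congr 1
    have h1 : (∫ r in Set.Iic y, Real.exp (-(r ^ 2))) + ∫ r in Set.Ioi y, Real.exp (-(r ^ 2))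
        = ∫ r : ℝ, Real.exp (-(r ^ 2)) :=
      intervalIntegral.integral_Iic_add_Ioi gauss_integrable.integrableOn gauss_integrable.integrableOn
    have h2 : (∫ r in Set.Iic y, Real.exp (-(r ^ 2)))
        - ∫ r in Set.Iic (0:ℝ), Real.exp (-(r ^ 2)) = ∫ r in (0:ℝ)..y, Real.exp (-(r ^ 2)) :=
      intervalIntegral.integral_Iic_sub_Iic gauss_integrable.integrableOn
        gauss_integrable.integrableOn
    linarith
  have hd : HasDerivAt (fun y => ∫ r in (0:ℝ)..y, Real.exp (-(r ^ 2)))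
      (Real.exp (-(x ^ 2))) x := by
    apply intervalIntegral.integral_hasDerivAt_right
      (Continuous.intervalIntegrable (by continuity) _ _)
      (Continuous.stronglyMeasurableAtFilter (by continuity) _ _)
      (Continuous.continuousAt (by continuity))
  have := (((hasDerivAt_const x ((∫ r : ℝ, Real.exp (-(r ^ 2))) -
      (∫ r in Set.Iic (0:ℝ), Real.exp (-(r ^ 2))))).sub hd).const_mul (2 / Real.sqrt Real.pi))
  simp only [zero_sub] at this
  have heq : erfc = (fun y => (2 / Real.sqrt Real.pi) *
      ((∫ r : ℝ, Real.exp (-(r ^ 2))) - (∫ r in Set.Iic (0:ℝ), Real.exp (-(r ^ 2)))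
        - ∫ r in (0:ℝ)..y, Real.exp (-(r ^ 2)))) := funext key
  rw [heq]
  exact this.congr_deriv (by ring)

lemma erfc_continuous : Continuous erfc :=
  continuous_iff_continuousAt.2 fun x => (hasDerivAt_erfc x).continuousAt



lemma Gamma0_integrableOn {x : ℝ} (hx : 0 < x) :
    IntegrableOn (fun t => Real.exp (-t) / t) (Set.Ioi x) := by
  have h0 : IntegrableOn (fun t : ℝ => Real.exp (-1 * t)) (Set.Ioi x) :=
    exp_neg_integrableOn_Ioi x one_pos
  simp only [neg_one_mul] at h0
  apply Integrable.mono' (h0.const_mul x⁻¹)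
  · apply ContinuousOn.aestronglyMeasurable _ measurableSet_Ioi
    exact ContinuousOn.div (Continuous.continuousOn (by continuity)) continuousOn_id
      (fun t ht => by exact (lt_trans hx ht).ne')
  · filter_upwards [ae_restrict_mem measurableSet_Ioi] with t ht
    have h1 : x < t := ht
    have ht0 : 0 < t := hx.trans h1
    rw [Real.norm_eq_abs, abs_of_nonneg (div_nonneg (Real.exp_pos _).le ht0.le)]
    have h2 : t⁻¹ ≤ x⁻¹ := inv_anti₀ hx h1.le
    calc Real.exp (-t) / t = t⁻¹ * Real.exp (-t) := by ring
      _ ≤ x⁻¹ * Real.exp (-t) := mul_le_mul_of_nonneg_right h2 (Real.exp_pos _).le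

lemma Gamma0_nonneg {x : ℝ} (hx : 0 < x) : 0 ≤ Gamma0 x :=
  setIntegral_nonneg measurableSet_Ioi
    (fun t ht => div_nonneg (Real.exp_pos _).le (hx.trans ht).le)

lemma Gamma0_le {x : ℝ} (hx : 0 < x) : Gamma0 x ≤ Real.exp (-x) / x := by
  have h0 : IntegrableOn (fun t : ℝ => Real.exp (-1 * t)) (Set.Ioi x) :=
    exp_neg_integrableOn_Ioi x one_pos
  simp only [neg_one_mul] at h0
  have h1 : Gamma0 x ≤ ∫ t in Set.Ioi x, x⁻¹ * Real.exp (-t) := by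
    apply setIntegral_mono_on (Gamma0_integrableOn hx) (h0.const_mul _) measurableSet_Ioi
    intro t ht
    have h2 : t⁻¹ ≤ x⁻¹ := inv_anti₀ hx (le_of_lt ht)
    calc Real.exp (-t) / t = t⁻¹ * Real.exp (-t) := by ring
      _ ≤ x⁻¹ * Real.exp (-t) := mul_le_mul_of_nonneg_right h2 (Real.exp_pos _).le
  rw [MeasureTheory.integral_const_mul, integral_exp_neg_Ioi] at h1
  linarith [h1, (by rw [div_eq_mul_inv, mul_comm] : Real.exp (-x) / x = x⁻¹ * Real.exp (-x))]

lemma Gamma0_sub {a b : ℝ} (ha : 0 < a) (hb : 0 < b) :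
    Gamma0 a - Gamma0 b = ∫ t in a..b, Real.exp (-t) / t := by
  wlog hab : a ≤ b generalizing a b
  · rw [intervalIntegral.integral_symm, ← this hb ha (le_of_not_ge hab)]; ring
  have hsplit : Set.Ioi a = Set.Ioc a b ∪ Set.Ioi b := (Set.Ioc_union_Ioi_eq_Ioi hab).symm
  have : Gamma0 a = (∫ t in Set.Ioc a b, Real.exp (-t) / t) + Gamma0 b := by
    unfold Gamma0
    rw [hsplit]
    exact setIntegral_union (Set.Ioc_disjoint_Ioi le_rfl) measurableSet_Ioi
      ((Gamma0_integrableOn ha).mono_set (by rw [hsplit]; exact Set.subset_union_left))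
      (Gamma0_integrableOn hb)
  rw [this, intervalIntegral.integral_of_le hab]
  ring

lemma hasDerivAt_Gamma0 {x : ℝ} (hx : 0 < x) :
    HasDerivAt Gamma0 (-(Real.exp (-x) / x)) x := by
  have heq : ∀ᶠ y in nhds x, Gamma0 y = (∫ t in y..x, Real.exp (-t) / t) + Gamma0 x := by
    filter_upwards [eventually_gt_nhds hx] with y hy
    have := Gamma0_sub hy hx
    linarith
  have hd : HasDerivAt (fun y => (∫ t in y..x, Real.exp (-t) / t) + Gamma0 x)
      (-(Real.exp (-x) / x)) x := by
    apply HasDerivAt.add_const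
    apply intervalIntegral.integral_hasDerivAt_left
    · exact IntervalIntegrable.refl
    · exact (((Real.measurable_exp.comp measurable_neg).div
        measurable_id).stronglyMeasurable).stronglyMeasurableAtFilter
    · exact ContinuousAt.div (Continuous.continuousAt (by continuity)) continuousAt_id hx.ne'
  exact hd.congr_of_eventuallyEq heq




lemma exp_inv_div_le {p t : ℝ} (hp : 0 < p) (ht : 0 < t) :
    Real.exp (-(p * t⁻¹)) / t ≤ p⁻¹ := by
  have hs := s_exp_le_one (show 0 ≤ p * t⁻¹ by positivity)
  rw [div_le_iff₀ ht]
  have h1 : t * t⁻¹ = 1 := mul_inv_cancel₀ ht.ne'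
  have h2 : p * p⁻¹ = 1 := mul_inv_cancel₀ hp.ne'
  calc Real.exp (-(p * t⁻¹)) = p * t⁻¹ * Real.exp (-(p * t⁻¹)) * (t * p⁻¹) := by
        rw [show p * t⁻¹ * Real.exp (-(p * t⁻¹)) * (t * p⁻¹)
          = Real.exp (-(p * t⁻¹)) * ((t * t⁻¹) * (p * p⁻¹)) from by ring, h1, h2]
        ring
    _ ≤ 1 * (t * p⁻¹) := mul_le_mul_of_nonneg_right hs (by positivity)
    _ = p⁻¹ * t := by ring

lemma contOn_arg (a b c : ℝ) :
    ContinuousOn (fun t : ℝ => c * (t⁻¹ * a + t * b)) (Set.Ioi 0) := by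
  apply ContinuousOn.mul continuousOn_const
  apply ContinuousOn.add
  · exact ContinuousOn.mul (ContinuousOn.inv₀ continuousOn_id fun t ht => ne_of_gt ht)
      continuousOn_const
  · exact ContinuousOn.mul continuousOn_id continuousOn_const

lemma core_integrableOn {a b c : ℝ} (ha : 0 < a) (hb : 0 < b) (hc : 0 < c) :
    IntegrableOn (fun t => erfc (c * (t⁻¹ * a + t * b)) / t) (Set.Ioi 0) := by
  have h0 : IntegrableOn (fun t : ℝ => Real.exp (-(c * b) * t)) (Set.Ioi 0) :=
    exp_neg_integrableOn_Ioi 0 (by positivity)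
  apply Integrable.mono' (h0.const_mul (6 * (c * a)⁻¹))
  · apply ContinuousOn.aestronglyMeasurable _ measurableSet_Ioi
    exact ContinuousOn.div (erfc_continuous.comp_continuousOn (contOn_arg a b c))
      continuousOn_id (fun t ht => ne_of_gt ht)
  · filter_upwards [ae_restrict_mem measurableSet_Ioi] with t ht
    have ht0 : (0:ℝ) < t := ht
    rw [Real.norm_eq_abs,
      abs_of_nonneg (div_nonneg (erfc_nonneg _) ht0.le)]
    have harg : c * (t⁻¹ * a + t * b) = c * a * t⁻¹ + c * b * t := by ring
    have h1 : erfc (c * (t⁻¹ * a + t * b)) / t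
        ≤ 6 * Real.exp (-(c * a * t⁻¹ + c * b * t)) / t := by
      rw [harg]
      gcongr
      exact erfc_le _
    have h2 : Real.exp (-(c * a * t⁻¹ + c * b * t))
        = Real.exp (-(c * a * t⁻¹)) * Real.exp (-(c * b * t)) := by
      rw [← Real.exp_add]; ring_nf
    have h3 : Real.exp (-(c * a * t⁻¹)) / t ≤ (c * a)⁻¹ :=
      exp_inv_div_le (by positivity) ht0
    calc erfc (c * (t⁻¹ * a + t * b)) / t
        ≤ 6 * Real.exp (-(c * a * t⁻¹ + c * b * t)) / t := h1
      _ = 6 * (Real.exp (-(c * a * t⁻¹)) / t) * Real.exp (-(c * b * t)) := by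
          rw [h2]; ring
      _ ≤ 6 * (c * a)⁻¹ * Real.exp (-(c * b * t)) := by
          gcongr
      _ = 6 * (c * a)⁻¹ * Real.exp (-(c * b) * t) := by ring_nf

def Fint (m : ℝ) : ℝ := ∫ t in Set.Ioi (0:ℝ), erfc (m * (t⁻¹ + t)) / t

lemma Fint_integrableOn {m : ℝ} (hm : 0 < m) :
    IntegrableOn (fun t => erfc (m * (t⁻¹ + t)) / t) (Set.Ioi 0) := by
  have := core_integrableOn one_pos one_pos hm
  apply this.congr
  filter_upwards [] with t
  norm_num

lemma phi_image : (fun t : ℝ => t - t⁻¹) '' (Set.Ioi 0) = Set.univ := by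
  apply Set.eq_univ_of_forall
  intro u
  have h4 : (0:ℝ) < u ^ 2 + 4 := by positivity
  set w := Real.sqrt (u ^ 2 + 4) with hw
  have hw2 : w ^ 2 = u ^ 2 + 4 := Real.sq_sqrt h4.le
  have hwu : |u| < w := by
    rw [hw, ← Real.sqrt_sq_eq_abs]
    exact Real.sqrt_lt_sqrt (sq_nonneg u) (by linarith)
  have hwpos : 0 < u + w := by
    rcases abs_lt.1 hwu with ⟨h5, _⟩; linarith
  refine ⟨(u + w) / 2, by simpa using by positivity, ?_⟩
  have ht : (u + w) / 2 ≠ 0 := by positivity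
  field_simp
  nlinarith [hw2]

lemma phi_injOn : Set.InjOn (fun t : ℝ => t - t⁻¹) (Set.Ioi 0) := by
  apply StrictMonoOn.injOn
  intro a ha b hb hab
  have ha0 : (0:ℝ) < a := ha
  have hb0 : (0:ℝ) < b := hb
  have : b⁻¹ < a⁻¹ := by
    rw [inv_lt_inv₀ hb0 ha0]; exact hab
  simp only
  linarith

lemma phi_hasDeriv {t : ℝ} (ht : 0 < t) :
    HasDerivWithinAt (fun t : ℝ => t - t⁻¹) (1 + (t ^ 2)⁻¹) (Set.Ioi 0) t := by
  have := (hasDerivAt_id' t).sub (hasDerivAt_inv ht.ne')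
  exact this.hasDerivWithinAt.congr_deriv (by ring)

lemma gauss_shift_integral {m : ℝ} (hm : 0 < m) :
    (∫ u : ℝ, (2 / Real.sqrt Real.pi) * Real.exp (-(m ^ 2 * (u ^ 2 + 4))))
      = 2 * Real.exp (-(4 * m ^ 2)) / m := by
  have h1 : ∀ u : ℝ, Real.exp (-(m ^ 2 * (u ^ 2 + 4)))
      = Real.exp (-(4 * m ^ 2)) * Real.exp (-(m ^ 2) * u ^ 2) := by
    intro u; rw [← Real.exp_add]; ring_nf
  simp_rw [h1, ← mul_assoc]
  rw [MeasureTheory.integral_const_mul, integral_gaussian]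
  have hπ : (0:ℝ) < Real.sqrt Real.pi := Real.sqrt_pos.2 Real.pi_pos
  have h2 : Real.sqrt (Real.pi / m ^ 2) = Real.sqrt Real.pi / m := by
    rw [Real.sqrt_div Real.pi_pos.le, Real.sqrt_sq hm.le]
  rw [h2]
  field_simp

lemma FD_contOn (x : ℝ) : ContinuousOn (fun t : ℝ => erfc (x * (t⁻¹ + t)) / t) (Set.Ioi 0) := by
  apply ContinuousOn.div _ continuousOn_id (fun t ht => ne_of_gt ht)
  apply erfc_continuous.comp_continuousOn
  apply ContinuousOn.mul continuousOn_const
  exact ContinuousOn.add (ContinuousOn.inv₀ continuousOn_id fun t ht => ne_of_gt ht)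
    continuousOn_id

lemma FD'_contOn (x : ℝ) : ContinuousOn
    (fun t : ℝ => -(2 / Real.sqrt Real.pi) * Real.exp (-((x * (t⁻¹ + t)) ^ 2))
      * (t⁻¹ + t) / t) (Set.Ioi 0) := by
  apply ContinuousOn.div _ continuousOn_id (fun t ht => ne_of_gt ht)
  apply ContinuousOn.mul
  · apply ContinuousOn.mul continuousOn_const
    apply Real.continuous_exp.comp_continuousOn
    apply ContinuousOn.neg
    apply ContinuousOn.pow
    apply ContinuousOn.mul continuousOn_const
    exact ContinuousOn.add (ContinuousOn.inv₀ continuousOn_id fun t ht => ne_of_gt ht)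
      continuousOn_id
  · exact ContinuousOn.add (ContinuousOn.inv₀ continuousOn_id fun t ht => ne_of_gt ht)
      continuousOn_id

lemma hasDerivAt_Fint {m : ℝ} (hm : 0 < m) :
    HasDerivAt Fint (∫ t in Set.Ioi (0:ℝ),
      -(2 / Real.sqrt Real.pi) * Real.exp (-((m * (t⁻¹ + t)) ^ 2)) * (t⁻¹ + t) / t) m := by
  set k : ℝ := (m / 2) ^ 2 with hk
  have hkpos : 0 < k := by positivity
  have key := hasDerivAt_integral_of_dominated_loc_of_deriv_le
    (F := fun (x : ℝ) (t : ℝ) => erfc (x * (t⁻¹ + t)) / t)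
    (F' := fun (x : ℝ) (t : ℝ) =>
      -(2 / Real.sqrt Real.pi) * Real.exp (-((x * (t⁻¹ + t)) ^ 2)) * (t⁻¹ + t) / t)
    (μ := volume.restrict (Set.Ioi 0)) (x₀ := m)
    (bound := fun t => (2 / Real.sqrt Real.pi) * (1 + k⁻¹) * Real.exp (-k * t ^ 2))
    (Metric.ball_mem_nhds m (show (0:ℝ) < m / 2 by positivity))
    ?_ ?_ ?_ ?_ ?_ ?_
  · exact key.2
  · filter_upwards [] with x
    exact (FD_contOn x).aestronglyMeasurable measurableSet_Ioi
  · exact Fint_integrableOn hm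
  · exact (FD'_contOn m).aestronglyMeasurable measurableSet_Ioi
  · filter_upwards [ae_restrict_mem measurableSet_Ioi] with t ht x hx
    have ht0 : (0:ℝ) < t := ht
    have hx2 : m / 2 < x := by
      have := abs_lt.1 (by simpa [Real.dist_eq] using Metric.mem_ball.1 hx)
      linarith [this.1]
    have hs : (0:ℝ) < t⁻¹ + t := by positivity
    have hxs : k * (t⁻¹ + t) ^ 2 ≤ (x * (t⁻¹ + t)) ^ 2 := by
      rw [mul_pow]
      have : k ≤ x ^ 2 := by rw [hk]; nlinarith
      nlinarith [sq_nonneg (t⁻¹ + t)]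
    have hexp : Real.exp (-((x * (t⁻¹ + t)) ^ 2))
        ≤ Real.exp (-(k * t ^ 2)) * Real.exp (-(k * (t⁻¹) ^ 2)) := by
      rw [← Real.exp_add]
      apply Real.exp_le_exp.2
      have h1 : t⁻¹ * t = 1 := inv_mul_cancel₀ ht0.ne'
      nlinarith [hxs, hkpos]
    have habs : ‖-(2 / Real.sqrt Real.pi) * Real.exp (-((x * (t⁻¹ + t)) ^ 2))
        * (t⁻¹ + t) / t‖ = (2 / Real.sqrt Real.pi) * Real.exp (-((x * (t⁻¹ + t)) ^ 2))
        * (t⁻¹ + t) / t := by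
      rw [Real.norm_eq_abs, abs_div, abs_of_pos ht0, abs_of_nonpos (by
        have h2 : (0:ℝ) < Real.sqrt Real.pi := Real.sqrt_pos.2 Real.pi_pos
        have := Real.exp_pos (-((x * (t⁻¹ + t)) ^ 2))
        nlinarith [mul_pos (mul_pos (div_pos two_pos h2) this) hs]), neg_mul, neg_mul, neg_neg]
    rw [habs]
    have hts : (t⁻¹ + t) / t = 1 + (t⁻¹) ^ 2 := by
      field_simp
      ring
    have hinv : (t⁻¹) ^ 2 * Real.exp (-(k * (t⁻¹) ^ 2)) ≤ k⁻¹ := by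
      have hs2 := s_exp_le_one (show (0:ℝ) ≤ k * (t⁻¹) ^ 2 by positivity)
      have h2 : k * k⁻¹ = 1 := mul_inv_cancel₀ hkpos.ne'
      calc (t⁻¹) ^ 2 * Real.exp (-(k * (t⁻¹) ^ 2))
          = k⁻¹ * (k * (t⁻¹) ^ 2 * Real.exp (-(k * (t⁻¹) ^ 2))) := by
            rw [show k⁻¹ * (k * (t⁻¹) ^ 2 * Real.exp (-(k * (t⁻¹) ^ 2)))
              = (k * k⁻¹) * ((t⁻¹) ^ 2 * Real.exp (-(k * (t⁻¹) ^ 2))) from by ring, h2]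
            ring
        _ ≤ k⁻¹ * 1 := mul_le_mul_of_nonneg_left hs2 (by positivity)
        _ = k⁻¹ := mul_one _
    have hfac : (1 + (t⁻¹) ^ 2) * Real.exp (-(k * (t⁻¹) ^ 2)) ≤ 1 + k⁻¹ := by
      have he1 : Real.exp (-(k * (t⁻¹) ^ 2)) ≤ 1 := by
        apply Real.exp_le_one_iff.2
        nlinarith [hkpos, sq_nonneg (t⁻¹)]
      nlinarith [hinv, Real.exp_pos (-(k * (t⁻¹) ^ 2)), sq_nonneg (t⁻¹)]
    calc (2 / Real.sqrt Real.pi) * Real.exp (-((x * (t⁻¹ + t)) ^ 2)) * (t⁻¹ + t) / t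
        = (2 / Real.sqrt Real.pi) * (Real.exp (-((x * (t⁻¹ + t)) ^ 2))
            * (1 + (t⁻¹) ^ 2)) := by
          rw [show (2 / Real.sqrt Real.pi) * Real.exp (-((x * (t⁻¹ + t)) ^ 2)) * (t⁻¹ + t) / t
            = (2 / Real.sqrt Real.pi) * Real.exp (-((x * (t⁻¹ + t)) ^ 2)) * ((t⁻¹ + t) / t)
            from by ring, hts]
          ring
      _ ≤ (2 / Real.sqrt Real.pi) * ((Real.exp (-(k * t ^ 2))
            * Real.exp (-(k * (t⁻¹) ^ 2))) * (1 + (t⁻¹) ^ 2)) := by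
          have h2 : (0:ℝ) < Real.sqrt Real.pi := Real.sqrt_pos.2 Real.pi_pos
          apply mul_le_mul_of_nonneg_left _ (by positivity)
          apply mul_le_mul_of_nonneg_right hexp (by positivity)
      _ = (2 / Real.sqrt Real.pi) * Real.exp (-(k * t ^ 2))
            * ((1 + (t⁻¹) ^ 2) * Real.exp (-(k * (t⁻¹) ^ 2))) := by ring
      _ ≤ (2 / Real.sqrt Real.pi) * Real.exp (-(k * t ^ 2)) * (1 + k⁻¹) := by
          apply mul_le_mul_of_nonneg_left hfac (by positivity)
      _ = (2 / Real.sqrt Real.pi) * (1 + k⁻¹) * Real.exp (-k * t ^ 2) := by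
          rw [neg_mul]; ring
  · exact ((integrable_exp_neg_mul_sq hkpos).const_mul _).restrict
  · filter_upwards [ae_restrict_mem measurableSet_Ioi] with t ht x hx
    have ht0 : (0:ℝ) < t := ht
    have hd := ((hasDerivAt_erfc (x * (t⁻¹ + t))).comp x
      (hasDerivAt_mul_const (t⁻¹ + t))).div_const t
    exact hd

lemma Fint_deriv_value {m : ℝ} (hm : 0 < m) :
    (∫ t in Set.Ioi (0:ℝ),
        -(2 / Real.sqrt Real.pi) * Real.exp (-((m * (t⁻¹ + t)) ^ 2)) * (t⁻¹ + t) / t)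
      = -(2 * Real.exp (-(4 * m ^ 2)) / m) := by
  have himg := integral_image_eq_integral_abs_deriv_smul (f := fun t : ℝ => t - t⁻¹)
    (f' := fun t : ℝ => 1 + (t ^ 2)⁻¹) measurableSet_Ioi
    (fun t ht => phi_hasDeriv ht) phi_injOn
    (fun u => (2 / Real.sqrt Real.pi) * Real.exp (-(m ^ 2 * (u ^ 2 + 4))))
  rw [phi_image, MeasureTheory.setIntegral_univ] at himg
  have hcong : Set.EqOn
      (fun t : ℝ => -(2 / Real.sqrt Real.pi) * Real.exp (-((m * (t⁻¹ + t)) ^ 2)) * (t⁻¹ + t) / t)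
      (fun t : ℝ => -(|1 + (t ^ 2)⁻¹| •
        ((2 / Real.sqrt Real.pi) * Real.exp (-(m ^ 2 * ((t - t⁻¹) ^ 2 + 4))))))
      (Set.Ioi 0) := by
    intro t ht
    have ht0 : (0:ℝ) < t := ht
    have habs : |1 + ((t:ℝ) ^ 2)⁻¹| = 1 + (t ^ 2)⁻¹ := abs_of_pos (by positivity)
    have h1 : t * t⁻¹ = 1 := mul_inv_cancel₀ ht0.ne'
    have hsq : (m * (t⁻¹ + t)) ^ 2 = m ^ 2 * ((t - t⁻¹) ^ 2 + 4) := by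
      have : (t⁻¹ + t) ^ 2 = (t - t⁻¹) ^ 2 + 4 := by nlinarith [h1]
      rw [mul_pow, this]
    simp only [habs, smul_eq_mul, hsq]
    rw [div_eq_iff ht0.ne']
    field_simp
    ring
  rw [setIntegral_congr_fun measurableSet_Ioi hcong, integral_neg, ← himg,
    gauss_shift_integral hm]

lemma hasDerivAt_Fint' {m : ℝ} (hm : 0 < m) :
    HasDerivAt Fint (-(2 * Real.exp (-(4 * m ^ 2)) / m)) m := by
  rw [← Fint_deriv_value hm]; exact hasDerivAt_Fint hm

lemma hasDerivAt_G {m : ℝ} (hm : 0 < m) :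
    HasDerivAt (fun m => Gamma0 (4 * m ^ 2)) (-(2 * Real.exp (-(4 * m ^ 2)) / m)) m := by
  have h4 : (0:ℝ) < 4 * m ^ 2 := by positivity
  have hinner : HasDerivAt (fun m : ℝ => 4 * m ^ 2) (8 * m) m := by
    have := ((hasDerivAt_pow 2 m).const_mul (4:ℝ))
    simpa using this.congr_deriv (by ring)
  have := (hasDerivAt_Gamma0 h4).comp m hinner
  refine this.congr_deriv ?_
  field_simp
  ring

lemma Fint_tendsto : Tendsto Fint atTop (𝓝 0) := by
  have main : Tendsto (fun m => ∫ t in Set.Ioi (0:ℝ), erfc (m * (t⁻¹ + t)) / t) atTop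
      (𝓝 (∫ _ in Set.Ioi (0:ℝ), (0:ℝ))) := by
    apply tendsto_integral_filter_of_dominated_convergence (fun t => 6 * Real.exp (-t))
    · filter_upwards [] with m
      exact (FD_contOn m).aestronglyMeasurable measurableSet_Ioi
    · filter_upwards [eventually_ge_atTop (1:ℝ)] with m hm
      filter_upwards [ae_restrict_mem measurableSet_Ioi] with t ht
      have ht0 : (0:ℝ) < t := ht
      rw [Real.norm_eq_abs, abs_of_nonneg (div_nonneg (erfc_nonneg _) ht0.le)]
      have hs0 : (0:ℝ) < t⁻¹ + t := by positivity
      have hmono : Real.exp (-(m * (t⁻¹ + t))) ≤ Real.exp (-(t⁻¹ + t)) := by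
        apply Real.exp_le_exp.2
        nlinarith
      have hsplit : Real.exp (-(t⁻¹ + t)) = Real.exp (-t⁻¹) * Real.exp (-t) := by
        rw [← Real.exp_add]; ring_nf
      have hiv : Real.exp (-t⁻¹) / t ≤ 1 := by
        simpa using exp_inv_div_le one_pos ht0
      calc erfc (m * (t⁻¹ + t)) / t ≤ 6 * Real.exp (-(m * (t⁻¹ + t))) / t := by
            gcongr
            exact erfc_le _
        _ ≤ 6 * Real.exp (-(t⁻¹ + t)) / t := by gcongr
        _ = 6 * (Real.exp (-t⁻¹) / t) * Real.exp (-t) := by rw [hsplit]; ring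
        _ ≤ 6 * 1 * Real.exp (-t) := by
            apply mul_le_mul_of_nonneg_right _ (Real.exp_pos _).le
            apply mul_le_mul_of_nonneg_left hiv (by norm_num)
        _ = 6 * Real.exp (-t) := by ring
    · have h0 : IntegrableOn (fun t : ℝ => Real.exp (-1 * t)) (Set.Ioi 0) :=
        exp_neg_integrableOn_Ioi 0 one_pos
      simp only [neg_one_mul] at h0
      exact h0.const_mul 6
    · filter_upwards [ae_restrict_mem measurableSet_Ioi] with t ht
      have ht0 : (0:ℝ) < t := ht
      have hs0 : (0:ℝ) < t⁻¹ + t := by positivity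
      apply squeeze_zero (fun m => div_nonneg (erfc_nonneg _) ht0.le)
        (g := fun m => (6 / t) * Real.exp (-((t⁻¹ + t) * m)))
        (fun m => ?_)
      · have h1 : Tendsto (fun m : ℝ => (t⁻¹ + t) * m) atTop atTop :=
          Tendsto.const_mul_atTop hs0 tendsto_id
        have h2 := Real.tendsto_exp_neg_atTop_nhds_zero.comp h1
        have := h2.const_mul (6 / t)
        simpa [Function.comp_def] using this
      · calc erfc (m * (t⁻¹ + t)) / t ≤ 6 * Real.exp (-(m * (t⁻¹ + t))) / t := by
              gcongr
              exact erfc_le _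
          _ = (6 / t) * Real.exp (-((t⁻¹ + t) * m)) := by rw [mul_comm m]; ring
  simp at main
  exact main

lemma G_tendsto : Tendsto (fun m : ℝ => Gamma0 (4 * m ^ 2)) atTop (𝓝 0) := by
  have hsq : Tendsto (fun m : ℝ => 4 * m ^ 2) atTop atTop :=
    Tendsto.const_mul_atTop (by norm_num) (tendsto_pow_atTop (by norm_num))
  have h1 : Tendsto (fun m : ℝ => Real.exp (-(4 * m ^ 2))) atTop (𝓝 0) := by
    simpa [Function.comp_def] using Real.tendsto_exp_neg_atTop_nhds_zero.comp hsq
  have h2 : Tendsto (fun m : ℝ => (4 * m ^ 2)⁻¹) atTop (𝓝 0) := hsq.inv_tendsto_atTop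
  have h3 : Tendsto (fun m : ℝ => Real.exp (-(4 * m ^ 2)) * (4 * m ^ 2)⁻¹) atTop (𝓝 0) := by
    simpa using h1.mul h2
  apply squeeze_zero' (f := fun m : ℝ => Gamma0 (4 * m ^ 2))
    (g := fun m : ℝ => Real.exp (-(4 * m ^ 2)) * (4 * m ^ 2)⁻¹) ?_ ?_ h3
  · filter_upwards [eventually_gt_atTop (0:ℝ)] with m hm
    exact Gamma0_nonneg (by positivity)
  · filter_upwards [eventually_gt_atTop (0:ℝ)] with m hm
    have := Gamma0_le (show (0:ℝ) < 4 * m ^ 2 by positivity)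
    rw [div_eq_mul_inv] at this
    exact this

lemma Fint_eq_Gamma0 {m : ℝ} (hm : 0 < m) : Fint m = Gamma0 (4 * m ^ 2) := by
  set H : ℝ → ℝ := fun m => Fint m - Gamma0 (4 * m ^ 2) with hH
  have hderiv : ∀ x, 0 < x → HasDerivAt H 0 x := by
    intro x hx
    have := (hasDerivAt_Fint' hx).sub (hasDerivAt_G hx)
    simp at this
    exact this
  have hconst : ∀ x y, 0 < x → x < y → H x = H y := by
    intro x y hx hxy
    have hcont : ContinuousOn H (Set.Icc x y) := fun z hz =>
      ((hderiv z (lt_of_lt_of_le hx hz.1)).continuousAt).continuousWithinAt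
    obtain ⟨c, hc, hc'⟩ := exists_hasDerivAt_eq_slope H (fun _ => 0) hxy hcont
      (fun z hz => hderiv z (lt_trans hx hz.1))
    have h0 : (H y - H x) / (y - x) = 0 := hc'.symm
    rw [div_eq_zero_iff] at h0
    rcases h0 with h0 | h0
    · linarith
    · linarith
  have hev : H =ᶠ[atTop] fun _ => H m := by
    filter_upwards [eventually_gt_atTop m] with y hy
    exact (hconst m y hm hy).symm
  have hlim : Tendsto H atTop (𝓝 (H m)) := tendsto_const_nhds.congr' hev.symm
  have hlim0 : Tendsto H atTop (𝓝 0) := by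
    simpa using Fint_tendsto.sub G_tendsto
  have := tendsto_nhds_unique hlim hlim0
  have hzero : H m = 0 := this
  simpa [hH, sub_eq_zero] using hzero

lemma core_integral_eq {a b c : ℝ} (ha : 0 < a) (hb : 0 < b) (hc : 0 < c) :
    (∫ t in Set.Ioi (0:ℝ), erfc (c * (t⁻¹ * a + t * b)) / t)
      = Gamma0 (4 * (c ^ 2 * (a * b))) := by
  set sa := Real.sqrt a with hsa
  set sb := Real.sqrt b with hsb
  have hsa0 : 0 < sa := Real.sqrt_pos.2 ha
  have hsb0 : 0 < sb := Real.sqrt_pos.2 hb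
  have hsa2 : sa ^ 2 = a := Real.sq_sqrt ha.le
  have hsb2 : sb ^ 2 = b := Real.sq_sqrt hb.le
  set σ := sa / sb with hσ
  have hσ0 : 0 < σ := by positivity
  set m := c * (sa * sb) with hm
  have hm0 : 0 < m := by positivity
  have h1 := MeasureTheory.integral_comp_mul_left_Ioi
    (fun t => erfc (c * (t⁻¹ * a + t * b)) / t) 0 hσ0
  rw [mul_zero] at h1
  have h2 : (∫ x in Set.Ioi (0:ℝ), erfc (c * ((σ * x)⁻¹ * a + (σ * x) * b)) / (σ * x))
      = ∫ x in Set.Ioi (0:ℝ), σ⁻¹ * (erfc (m * (x⁻¹ + x)) / x) := by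
    apply setIntegral_congr_fun measurableSet_Ioi
    intro x hx
    have hx0 : (0:ℝ) < x := hx
    have harg : c * ((σ * x)⁻¹ * a + (σ * x) * b) = m * (x⁻¹ + x) := by
      rw [hσ, hm, ← hsa2, ← hsb2]
      field_simp
    simp only [harg]
    have heq : σ⁻¹ * (erfc (m * (x⁻¹ + x)) / x) = erfc (m * (x⁻¹ + x)) / (σ * x) := by
      field_simp
    rw [heq]
  beta_reduce at h1
  rw [h2, MeasureTheory.integral_const_mul, smul_eq_mul] at h1
  have h3 : (∫ t in Set.Ioi (0:ℝ), erfc (c * (t⁻¹ * a + t * b)) / t) = Fint m :=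
    (mul_left_cancel₀ (inv_ne_zero hσ0.ne') h1).symm
  rw [h3, Fint_eq_Gamma0 hm0]
  congr 1
  rw [hm, ← hsa2, ← hsb2]
  ring

lemma sign_div_pos {x c : ℝ} (hc : 0 < c) : Real.sign (x / c) = Real.sign x := by
  rcases lt_trichotomy x 0 with h | h | h
  · rw [Real.sign_of_neg h, Real.sign_of_neg (div_neg_of_neg_of_pos h hc)]
  · simp [h]
  · rw [Real.sign_of_pos h, Real.sign_of_pos (div_pos h hc)]

lemma integral_ofReal' {f : ℝ → ℝ} {μ : Measure ℝ} :
    ∫ x, ((f x : ℝ) : ℂ) ∂μ = ((∫ x, f x ∂μ : ℝ) : ℂ) := integral_ofReal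


/-- with `n = x₁x₂/N > 0`,
`∫_0^∞ φ*_τ(ι_t(x₁,x₂)) dt/t = sgn(x₁)·e(-nτ)·Γ(0,4πvn)`, the integral converging
absolutely; equivalently
`∫_0^∞ sgn(t⁻¹x₁+tx₂)·erfc(√(πv/N)|t⁻¹x₁+tx₂|) dt/t = sgn(x₁)·Γ(0,4πvn)`. -/
theorem stmt13 (N : ℕ) (hN : 0 < N) (τ : ℂ) (hτ : 0 < τ.im) (x₁ x₂ : ℝ)
    (hx : 0 < x₁ * x₂) :
    IntegrableOn (fun t : ℝ =>
      phiStar τ (iota N t x₁ x₂).1 (iota N t x₁ x₂).2 / (t : ℂ)) (Set.Ioi 0) ∧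
    (∫ t in Set.Ioi (0 : ℝ), phiStar τ (iota N t x₁ x₂).1 (iota N t x₁ x₂).2 / (t : ℂ)) =
      (Real.sign x₁ : ℂ) * eC (-((x₁ * x₂ / N : ℝ) : ℂ) * τ) *
        (Gamma0 (4 * Real.pi * τ.im * (x₁ * x₂ / N)) : ℂ) ∧
    IntegrableOn (fun t : ℝ =>
      Real.sign (t⁻¹ * x₁ + t * x₂) *
        erfc (Real.sqrt (Real.pi * τ.im / N) * |t⁻¹ * x₁ + t * x₂|) / t) (Set.Ioi 0) ∧
    (∫ t in Set.Ioi (0 : ℝ), Real.sign (t⁻¹ * x₁ + t * x₂) *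
        erfc (Real.sqrt (Real.pi * τ.im / N) * |t⁻¹ * x₁ + t * x₂|) / t) =
      Real.sign x₁ * Gamma0 (4 * Real.pi * τ.im * (x₁ * x₂ / N)) := by
  have hN0 : (0:ℝ) < (N:ℝ) := by exact_mod_cast hN
  set v := τ.im with hvdef
  have hv : (0:ℝ) < v := hτ
  have hcpos : 0 < Real.sqrt (Real.pi * v / ↑N) := Real.sqrt_pos.2 (by positivity)
  set c := Real.sqrt (Real.pi * v / ↑N) with hcdef
  have hx1 : x₁ ≠ 0 := by rintro rfl; simp at hx
  have hx2 : x₂ ≠ 0 := by rintro rfl; simp at hx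
  have ha : 0 < |x₁| := abs_pos.2 hx1
  have hb : 0 < |x₂| := abs_pos.2 hx2
  have hsigns : (0 < x₁ ∧ 0 < x₂) ∨ (x₁ < 0 ∧ x₂ < 0) := mul_pos_iff.1 hx
  have habs : ∀ t : ℝ, 0 < t → |t⁻¹ * x₁ + t * x₂| = t⁻¹ * |x₁| + t * |x₂| := by
    intro t ht
    rcases hsigns with ⟨h1, h2⟩ | ⟨h1, h2⟩
    · rw [abs_of_pos (by positivity), abs_of_pos h1, abs_of_pos h2]
    · have e1 : t⁻¹ * x₁ < 0 := mul_neg_of_pos_of_neg (inv_pos.2 ht) h1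
      have e2 : t * x₂ < 0 := mul_neg_of_pos_of_neg ht h2
      rw [abs_of_neg (by linarith), abs_of_neg h1, abs_of_neg h2]
      ring
  have hsign : ∀ t : ℝ, 0 < t → Real.sign (t⁻¹ * x₁ + t * x₂) = Real.sign x₁ := by
    intro t ht
    rcases hsigns with ⟨h1, h2⟩ | ⟨h1, h2⟩
    · rw [Real.sign_of_pos (by positivity), Real.sign_of_pos h1]
    · have e1 : t⁻¹ * x₁ < 0 := mul_neg_of_pos_of_neg (inv_pos.2 ht) h1
      have e2 : t * x₂ < 0 := mul_neg_of_pos_of_neg ht h2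
      rw [Real.sign_of_neg (by linarith), Real.sign_of_neg h1]
  have hcore := core_integrableOn ha hb hcpos
  have hc2 : c ^ 2 = Real.pi * v / ↑N := Real.sq_sqrt (by positivity)
  have hab : |x₁| * |x₂| = x₁ * x₂ := by rw [← abs_mul]; exact abs_of_pos hx
  have hGarg : 4 * (c ^ 2 * (|x₁| * |x₂|)) = 4 * Real.pi * v * (x₁ * x₂ / ↑N) := by
    rw [hc2, hab]; ring
  -- third part
  have heq3 : Set.EqOn
      (fun t : ℝ => Real.sign (t⁻¹ * x₁ + t * x₂) *
        erfc (c * |t⁻¹ * x₁ + t * x₂|) / t)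
      (fun t : ℝ => Real.sign x₁ * (erfc (c * (t⁻¹ * |x₁| + t * |x₂|)) / t))
      (Set.Ioi 0) := by
    intro t ht
    have ht0 : (0:ℝ) < t := ht
    simp only
    rw [hsign t ht0, habs t ht0, mul_div_assoc]
  have int3 : IntegrableOn (fun t : ℝ =>
      Real.sign (t⁻¹ * x₁ + t * x₂) * erfc (c * |t⁻¹ * x₁ + t * x₂|) / t)
      (Set.Ioi 0) :=
    IntegrableOn.congr_fun (hcore.const_mul (Real.sign x₁)) heq3.symm measurableSet_Ioi
  have val3 : (∫ t in Set.Ioi (0 : ℝ), Real.sign (t⁻¹ * x₁ + t * x₂) *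
        erfc (c * |t⁻¹ * x₁ + t * x₂|) / t)
      = Real.sign x₁ * Gamma0 (4 * Real.pi * v * (x₁ * x₂ / ↑N)) := by
    rw [setIntegral_congr_fun measurableSet_Ioi heq3, MeasureTheory.integral_const_mul,
      core_integral_eq ha hb hcpos, hGarg]
  -- first part
  have heq1 : Set.EqOn
      (fun t : ℝ => phiStar τ (iota N t x₁ x₂).1 (iota N t x₁ x₂).2 / (t : ℂ))
      (fun t : ℝ => (eC (-((x₁ * x₂ / N : ℝ) : ℂ) * τ) * (Real.sign x₁ : ℂ)) *
        ((erfc (c * (t⁻¹ * |x₁| + t * |x₂|)) / t : ℝ) : ℂ)) (Set.Ioi 0) := by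
    intro t ht
    have ht0 : (0:ℝ) < t := ht
    have hs0 : 0 < Real.sqrt (2 * (N:ℝ)) := Real.sqrt_pos.2 (by positivity)
    set s := Real.sqrt (2 * (N:ℝ)) with hsdef
    have hs2 : s ^ 2 = 2 * (N:ℝ) := Real.sq_sqrt (by positivity)
    simp only [phiStar, iota]
    -- eC argument
    have h1 : t⁻¹ * t = 1 := inv_mul_cancel₀ ht0.ne'
    have hBA : (t⁻¹ * x₁ - t * x₂) ^ 2 - (t⁻¹ * x₁ + t * x₂) ^ 2
        = -(4 * (x₁ * x₂)) := by
      have : (t⁻¹ * x₁ - t * x₂) ^ 2 - (t⁻¹ * x₁ + t * x₂) ^ 2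
          = -(4 * ((t⁻¹ * t) * (x₁ * x₂))) := by ring
      rw [this, h1, one_mul]
    have hreal : ((t⁻¹ * x₁ - t * x₂) / s) ^ 2 - ((t⁻¹ * x₁ + t * x₂) / s) ^ 2
        = -2 * (x₁ * x₂ / (N:ℝ)) := by
      rw [div_pow, div_pow, div_sub_div_same, hs2, hBA]
      field_simp
      ring
    have hA : ((((t⁻¹ * x₁ - t * x₂) / s : ℝ) : ℂ) ^ 2
        - (((t⁻¹ * x₁ + t * x₂) / s : ℝ) : ℂ) ^ 2) / 2 * τ
        = -((x₁ * x₂ / N : ℝ) : ℂ) * τ := by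
      have hcast : ((((t⁻¹ * x₁ - t * x₂) / s : ℝ) : ℂ) ^ 2
          - (((t⁻¹ * x₁ + t * x₂) / s : ℝ) : ℂ) ^ 2)
          = ((((t⁻¹ * x₁ - t * x₂) / s) ^ 2 - ((t⁻¹ * x₁ + t * x₂) / s) ^ 2 : ℝ) : ℂ) := by
        push_cast; ring
      rw [hcast, hreal]
      push_cast
      ring
    -- sign
    have hB : Real.sign ((t⁻¹ * x₁ + t * x₂) / s) = Real.sign x₁ := by
      rw [sign_div_pos hs0, hsign t ht0]
    -- erfc argument
    have hCc : Real.sqrt (2 * Real.pi * v) / s = c := by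
      rw [hsdef, hcdef, ← Real.sqrt_div (by positivity)]
      congr 1
      field_simp
    have hC : Real.sqrt (2 * Real.pi * v) * |(t⁻¹ * x₁ + t * x₂) / s|
        = c * (t⁻¹ * |x₁| + t * |x₂|) := by
      rw [abs_div, abs_of_pos hs0, habs t ht0, ← hCc]
      ring
    rw [hA, hB, hC]
    push_cast
    ring
  have int1 : IntegrableOn (fun t : ℝ =>
      phiStar τ (iota N t x₁ x₂).1 (iota N t x₁ x₂).2 / (t : ℂ)) (Set.Ioi 0) := by
    have := (hcore.ofReal (𝕜 := ℂ)).const_mul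
      (eC (-((x₁ * x₂ / N : ℝ) : ℂ) * τ) * (Real.sign x₁ : ℂ))
    apply Integrable.congr this
    filter_upwards [ae_restrict_mem measurableSet_Ioi] with t ht
    exact (heq1 ht).symm
  have val1 : (∫ t in Set.Ioi (0 : ℝ),
        phiStar τ (iota N t x₁ x₂).1 (iota N t x₁ x₂).2 / (t : ℂ))
      = (Real.sign x₁ : ℂ) * eC (-((x₁ * x₂ / N : ℝ) : ℂ) * τ) *
        (Gamma0 (4 * Real.pi * v * (x₁ * x₂ / ↑N)) : ℂ) := by
    rw [setIntegral_congr_fun measurableSet_Ioi heq1, MeasureTheory.integral_const_mul,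
      integral_ofReal', core_integral_eq ha hb hcpos, hGarg]
    ring
  exact ⟨int1, val1, int3, val3⟩

end
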